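/- Let D = Z_2(t). Given A, B ∈ D, the assignment f((P(t²)+Q(t²)t)/(R(t²)+S(t²)t)) = ((P(t)R(t)+Q(t)S(t)t)/(R(t²)+S(t²)t))·A + ((P(t)S(t)+Q(t)R(t))/(R(t²)+S(t²)t))·B is well-defined: if (P(t²)+Q(t²)t)/(R(t²)+S(t²)t) = (P̂(t²)+Q̂(t²)t)/(R̂(t²)+Ŝ(t²)t), then the corresponding right-hand sides agree. -/

import Mathlib

open Polynomial

lemma aux_aeval_sq (x : RatFunc (ZMod 2)) (P : Polynomial (ZMod 2)) :
    aeval (x ^ 2) P = (aeval x P) ^ 2 := by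
  have h : expand (ZMod 2) 2 P = P ^ 2 := by
    have h2 := Polynomial.map_frobenius_expand (p := 2) P
    rwa [ZMod.frobenius_zmod, Polynomial.map_id] at h2
  rw [← Polynomial.expand_aeval 2 P x, h, map_pow]

lemma aux_X_not_sq (f : RatFunc (ZMod 2)) : f ^ 2 ≠ RatFunc.X := by
  intro h
  have hf : f ≠ 0 := by
    rintro rfl
    exact RatFunc.X_ne_zero (show (RatFunc.X : RatFunc (ZMod 2)) = 0 from by simpa using h.symm)
  have := congrArg RatFunc.intDegree h
  rw [pow_two, RatFunc.intDegree_mul hf hf, RatFunc.intDegree_X] at this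
  omega

open Polynomial in
theorem stmt_15 (A B : RatFunc (ZMod 2)) (P Q R S P' Q' R' S' : Polynomial (ZMod 2))
    (hden : aeval ((RatFunc.X : RatFunc (ZMod 2)) ^ 2) R + aeval ((RatFunc.X : RatFunc (ZMod 2)) ^ 2) S * (RatFunc.X : RatFunc (ZMod 2)) ≠ 0)
    (hden' : aeval ((RatFunc.X : RatFunc (ZMod 2)) ^ 2) R' + aeval ((RatFunc.X : RatFunc (ZMod 2)) ^ 2) S' * (RatFunc.X : RatFunc (ZMod 2)) ≠ 0)
    (heq : (aeval ((RatFunc.X : RatFunc (ZMod 2)) ^ 2) P + aeval ((RatFunc.X : RatFunc (ZMod 2)) ^ 2) Q * (RatFunc.X : RatFunc (ZMod 2))) /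
        (aeval ((RatFunc.X : RatFunc (ZMod 2)) ^ 2) R + aeval ((RatFunc.X : RatFunc (ZMod 2)) ^ 2) S * (RatFunc.X : RatFunc (ZMod 2))) =
      (aeval ((RatFunc.X : RatFunc (ZMod 2)) ^ 2) P' + aeval ((RatFunc.X : RatFunc (ZMod 2)) ^ 2) Q' * (RatFunc.X : RatFunc (ZMod 2))) /
        (aeval ((RatFunc.X : RatFunc (ZMod 2)) ^ 2) R' + aeval ((RatFunc.X : RatFunc (ZMod 2)) ^ 2) S' * (RatFunc.X : RatFunc (ZMod 2)))) :
    (aeval (RatFunc.X : RatFunc (ZMod 2)) P * aeval (RatFunc.X : RatFunc (ZMod 2)) R + aeval (RatFunc.X : RatFunc (ZMod 2)) Q * aeval (RatFunc.X : RatFunc (ZMod 2)) S * (RatFunc.X : RatFunc (ZMod 2))) /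
        (aeval ((RatFunc.X : RatFunc (ZMod 2)) ^ 2) R + aeval ((RatFunc.X : RatFunc (ZMod 2)) ^ 2) S * (RatFunc.X : RatFunc (ZMod 2))) * A +
      (aeval (RatFunc.X : RatFunc (ZMod 2)) P * aeval (RatFunc.X : RatFunc (ZMod 2)) S + aeval (RatFunc.X : RatFunc (ZMod 2)) Q * aeval (RatFunc.X : RatFunc (ZMod 2)) R) /
        (aeval ((RatFunc.X : RatFunc (ZMod 2)) ^ 2) R + aeval ((RatFunc.X : RatFunc (ZMod 2)) ^ 2) S * (RatFunc.X : RatFunc (ZMod 2))) * B =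
    (aeval (RatFunc.X : RatFunc (ZMod 2)) P' * aeval (RatFunc.X : RatFunc (ZMod 2)) R' + aeval (RatFunc.X : RatFunc (ZMod 2)) Q' * aeval (RatFunc.X : RatFunc (ZMod 2)) S' * (RatFunc.X : RatFunc (ZMod 2))) /
        (aeval ((RatFunc.X : RatFunc (ZMod 2)) ^ 2) R' + aeval ((RatFunc.X : RatFunc (ZMod 2)) ^ 2) S' * (RatFunc.X : RatFunc (ZMod 2))) * A +
      (aeval (RatFunc.X : RatFunc (ZMod 2)) P' * aeval (RatFunc.X : RatFunc (ZMod 2)) S' + aeval (RatFunc.X : RatFunc (ZMod 2)) Q' * aeval (RatFunc.X : RatFunc (ZMod 2)) R') /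
        (aeval ((RatFunc.X : RatFunc (ZMod 2)) ^ 2) R' + aeval ((RatFunc.X : RatFunc (ZMod 2)) ^ 2) S' * (RatFunc.X : RatFunc (ZMod 2))) * B := by
  simp only [aux_aeval_sq] at hden hden' heq ⊢
  set x := (RatFunc.X : RatFunc (ZMod 2)) with hxdef
  set p := aeval x P
  set q := aeval x Q
  set r := aeval x R
  set s := aeval x S
  set p' := aeval x P'
  set q' := aeval x Q'
  set r' := aeval x R'
  set s' := aeval x S'
  have h2 : (2 : RatFunc (ZMod 2)) = 0 := by
    have h : CharP (RatFunc (ZMod 2)) 2 :=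
      charP_of_injective_algebraMap (algebraMap (ZMod 2) (RatFunc (ZMod 2))).injective 2
    exact_mod_cast CharP.cast_eq_zero (RatFunc (ZMod 2)) 2
  have H : (p^2 + q^2*x) * (r'^2 + s'^2*x) = (p'^2 + q'^2*x) * (r^2 + s^2*x) :=
    (div_eq_div_iff hden hden').mp heq
  have huv : (p*r' + p'*r + (q*s' + q'*s)*x)^2 = (p*s' + p'*s + q*r' + q'*r)^2 * x := by
    linear_combination H + (s^2*q'^2*x^2 + r^2*p'^2 + q*s*q'*s'*x^2 - q*s*p'*r'*x - q*r*q'*r'*x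
      + q*r*p'*s'*x - q^2*r'^2*x + p*s*q'*r'*x - p*s*p'*s'*x - p*r*q'*s'*x + p*r*p'*r'
      - p^2*s'^2*x) * h2
  have hv : p*s' + p'*s + q*r' + q'*r = 0 := by
    by_contra hv0
    apply aux_X_not_sq ((p*r' + p'*r + (q*s' + q'*s)*x) / (p*s' + p'*s + q*r' + q'*r))
    rw [div_pow, div_eq_iff (pow_ne_zero 2 hv0)]
    linear_combination huv
  have hu : p*r' + p'*r + (q*s' + q'*s)*x = 0 := by
    have hsq : (p*r' + p'*r + (q*s' + q'*s)*x)^2 = 0 := by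
      rw [huv, hv]; ring
    exact pow_eq_zero_iff (two_ne_zero) |>.mp hsq
  have hc1 : (p*r + q*s*x) / (r^2 + s^2*x) = (p'*r' + q'*s'*x) / (r'^2 + s'^2*x) := by
    rw [div_eq_div_iff hden hden']
    linear_combination (r*r' + s*s'*x) * hu + (x*(r*s' + s*r')) * hv +
      (-(s^2*q'*s'*x^2) - s^2*p'*r'*x - r*s*q'*r'*x - r*s*p'*s'*x - r^2*q'*s'*x - r^2*p'*r'
        - q*r*r'*s'*x - p*s*r'*s'*x) * h2
  have hc2 : (p*s + q*r) / (r^2 + s^2*x) = (p'*s' + q'*r') / (r'^2 + s'^2*x) := by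
    rw [div_eq_div_iff hden hden']
    linear_combination (r*s' + s*r') * hu + (r*r' + s*s'*x) * hv +
      (-(s^2*q'*r'*x) - s^2*p'*s'*x - r*s*q'*s'*x - r*s*p'*r' - r^2*q'*r' - r^2*p'*s'
        - q*s*r'*s'*x - p*r*r'*s') * h2
  rw [hc1, hc2]
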